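/- Let ⟨U|V⟩ be a nonsingular conditional distribution (i.e., for P_V-almost every v, the law of U given V=v is a mixture of absolutely continuous and discrete parts) with E[U²] < ∞. Then the conditional Rényi information dimension satisfies d(U|V) = E_V[d(U|V=v)], i.e., lim_{n→∞} H(⌊nU⌋/n | V)/log₂ n = E_V[lim_{n→∞} H(⌊nU⌋/n | V=v)/log₂ n]. -/

import Mathlib

open MeasureTheory ProbabilityTheory Filter
open scoped ENNReal

/-- A measure on `ℝ` is nonsingular if its singular part w.r.t. Lebesgue measure is carried
by a countable set (no singular continuous component). -/
def Nonsingular (μ : Measure ℝ) : Prop :=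
  ∃ s : Set ℝ, s.Countable ∧ μ.singularPart volume sᶜ = 0

/-- Shannon entropy (bits) of the quantization of a distribution `μ` on `ℝ` with resolution
`1/n`, i.e. of `⌊nU⌋/n` when `U ∼ μ`. -/
noncomputable def quantEnt (n : ℕ) (μ : Measure ℝ) : ℝ :=
  ∑' k : ℤ, -((μ (Set.Ico ((k : ℝ) / n) ((k + 1 : ℝ) / n))).toReal *
      Real.logb 2 (μ (Set.Ico ((k : ℝ) / n) ((k + 1 : ℝ) / n))).toReal)


private lemma mem_quant_iff {n : ℕ} (hn : 1 ≤ n) {k : ℤ} {u : ℝ} :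
    u ∈ Set.Ico ((k : ℝ) / n) ((k + 1 : ℝ) / n) ↔ ⌊(n : ℝ) * u⌋ = k := by
  have hn' : (0:ℝ) < n := by exact_mod_cast hn
  have h1 : (k : ℝ) / n ≤ u ↔ (k:ℝ) ≤ (n:ℝ) * u := by rw [div_le_iff₀ hn', mul_comm]
  have h2 : u < ((k:ℝ) + 1) / n ↔ (n:ℝ) * u < (k:ℝ) + 1 := by rw [lt_div_iff₀ hn', mul_comm]
  rw [Set.mem_Ico, h1, h2, Int.floor_eq_iff]

private lemma quant_disjoint {n : ℕ} (hn : 1 ≤ n) :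
    Pairwise (Function.onFun Disjoint fun k : ℤ =>
      Set.Ico ((k : ℝ) / n) ((k + 1 : ℝ) / n)) := by
  intro i j hij
  refine Set.disjoint_left.2 fun u hi hj => hij ?_
  rw [← (mem_quant_iff hn).1 hi, (mem_quant_iff hn).1 hj]

private lemma quant_iUnion {n : ℕ} (hn : 1 ≤ n) :
    (⋃ k : ℤ, Set.Ico ((k : ℝ) / n) ((k + 1 : ℝ) / n)) = Set.univ := by
  ext u
  simp only [Set.mem_iUnion, Set.mem_univ, iff_true]
  exact ⟨⌊(n:ℝ)*u⌋, (mem_quant_iff hn).2 rfl⟩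

private lemma negMulLog_le_aux {p q : ℝ} (hp : 0 ≤ p) (hq : 0 < q) :
    Real.negMulLog p ≤ -(p * Real.log q) + q := by
  rcases eq_or_lt_of_le hp with h | hp
  · simp [← h, Real.negMulLog, hq.le]
  · have h1 : Real.log (q / p) ≤ q / p - 1 := Real.log_le_sub_one_of_pos (by positivity)
    have h2 : Real.log (q / p) = Real.log q - Real.log p := Real.log_div hq.ne' hp.ne'
    have h4 : p * (Real.log q - Real.log p) ≤ q - p := by
      calc p * (Real.log q - Real.log p) = p * Real.log (q / p) := by rw [h2]
        _ ≤ p * (q / p - 1) := mul_le_mul_of_nonneg_left h1 hp.le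
        _ = q - p := by field_simp
    simp only [Real.negMulLog]
    nlinarith

private lemma natAbs_div_le {n : ℕ} (hn : 1 ≤ n) {k : ℤ} {u : ℝ}
    (hu : u ∈ Set.Ico ((k : ℝ) / n) ((k + 1 : ℝ) / n)) :
    (k.natAbs : ℝ) / n ≤ |u| + 1 := by
  have hn' : (1:ℝ) ≤ n := by exact_mod_cast hn
  have hn0 : (0:ℝ) < n := by linarith
  obtain ⟨h1, h2⟩ := hu
  have hA : (k.natAbs : ℝ) = |(k:ℝ)| := by
    rw [Nat.cast_natAbs, Int.cast_abs]
  have h6 : 1 / (n:ℝ) ≤ 1 := by rw [div_le_one hn0]; exact hn'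
  rcases le_or_gt 0 (k:ℝ) with hk | hk
  · rw [hA, abs_of_nonneg hk]
    have : (k:ℝ)/n ≤ |u| := le_trans h1 (le_abs_self u)
    linarith
  · rw [hA, abs_of_nonpos hk.le]
    have h5 : -(((k:ℝ) + 1) / n) < -u := neg_lt_neg h2
    have h7 : -u ≤ |u| := neg_le_abs u
    have : (-(k:ℝ))/n = -(((k:ℝ)+1)/n) + 1/n := by ring
    linarith

private lemma key_bound (μ : Measure ℝ) [IsProbabilityMeasure μ] {n : ℕ} (hn : 1 ≤ n) :
    ∑' k : ℤ, ENNReal.ofReal (Real.negMulLog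
        ((μ (Set.Ico ((k : ℝ) / n) ((k + 1 : ℝ) / n))).toReal))
      ≤ ENNReal.ofReal (Real.log n) + (∫⁻ u, ENNReal.ofReal (u ^ 2) ∂μ) + 8 := by
  have hn0 : (0:ℝ) < n := by exact_mod_cast hn
  have hn1 : (1:ℝ) ≤ n := by exact_mod_cast hn
  set I : ℤ → Set ℝ := fun k => Set.Ico ((k : ℝ) / n) ((k + 1 : ℝ) / n) with hI
  set p : ℤ → ℝ := fun k => (μ (I k)).toReal with hp
  set r : ℝ := (n:ℝ) / (n+1) with hr
  have hrpos : 0 < r := by rw [hr]; positivity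
  have hr0 : (0:ℝ) ≤ r := hrpos.le
  have hr1 : r < 1 := by rw [hr, div_lt_one (by linarith)]; linarith
  set q : ℤ → ℝ := fun k => (1/(n:ℝ)) * r ^ k.natAbs with hq
  have hqpos : ∀ k, 0 < q k := fun k => by rw [hq]; positivity
  set c : ℤ → ℝ := fun k => Real.log n + (k.natAbs : ℝ)/n with hc
  have hlogn : (0:ℝ) ≤ Real.log n := Real.log_nonneg hn1
  -- termwise bound
  have hterm : ∀ k, ENNReal.ofReal (Real.negMulLog (p k)) ≤
      ENNReal.ofReal (p k * c k) + ENNReal.ofReal (q k) := by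
    intro k
    have h1 : Real.negMulLog (p k) ≤ -(p k * Real.log (q k)) + q k :=
      negMulLog_le_aux ENNReal.toReal_nonneg (hqpos k)
    have hlr : -Real.log r ≤ 1/(n:ℝ) := by
      rw [← Real.log_inv]
      have hri : r⁻¹ = ((n:ℝ)+1)/n := by rw [hr, inv_div]
      rw [hri]
      calc Real.log (((n:ℝ)+1)/n) ≤ ((n:ℝ)+1)/n - 1 :=
            Real.log_le_sub_one_of_pos (by positivity)
        _ = 1/(n:ℝ) := by field_simp; ring
    have hexp : Real.log (q k) = -Real.log n + (k.natAbs:ℝ) * Real.log r := by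
      rw [hq]
      simp only
      rw [Real.log_mul (by positivity) (by positivity), one_div, Real.log_inv, Real.log_pow]
    have h2 : -Real.log (q k) ≤ c k := by
      have hm : (k.natAbs:ℝ) * (-Real.log r) ≤ (k.natAbs:ℝ) * (1/(n:ℝ)) :=
        mul_le_mul_of_nonneg_left hlr (by positivity)
      rw [hexp, hc]
      have : (k.natAbs:ℝ)/n = (k.natAbs:ℝ) * (1/(n:ℝ)) := by ring
      simp only
      nlinarith [hm]
    have h3 : -(p k * Real.log (q k)) ≤ p k * c k := by
      calc -(p k * Real.log (q k)) = p k * (-Real.log (q k)) := by ring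
        _ ≤ p k * c k := mul_le_mul_of_nonneg_left h2 ENNReal.toReal_nonneg
    calc ENNReal.ofReal (Real.negMulLog (p k)) ≤ ENNReal.ofReal (p k * c k + q k) :=
          ENNReal.ofReal_le_ofReal (by linarith)
      _ ≤ ENNReal.ofReal (p k * c k) + ENNReal.ofReal (q k) := ENNReal.ofReal_add_le
  have hsplit : ∑' k : ℤ, ENNReal.ofReal (Real.negMulLog (p k)) ≤
      (∑' k : ℤ, ENNReal.ofReal (p k * c k)) + ∑' k : ℤ, ENNReal.ofReal (q k) := by
    calc ∑' k : ℤ, ENNReal.ofReal (Real.negMulLog (p k))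
        ≤ ∑' k : ℤ, (ENNReal.ofReal (p k * c k) + ENNReal.ofReal (q k)) :=
          ENNReal.tsum_le_tsum hterm
      _ = _ := ENNReal.tsum_add
  have hsum1 : ∑' k : ℤ, ENNReal.ofReal (p k * c k) ≤
      ENNReal.ofReal (Real.log n) + (∫⁻ u, ENNReal.ofReal (u ^ 2) ∂μ) + 2 := by
    have hterm1 : ∀ k : ℤ, ENNReal.ofReal (p k * c k) ≤
        ∫⁻ u in I k, (ENNReal.ofReal (Real.log n) + ENNReal.ofReal (u ^ 2) + 2) ∂μ := by
      intro k
      have he : ENNReal.ofReal (p k * c k) = ENNReal.ofReal (c k) * μ (I k) := by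
        rw [ENNReal.ofReal_mul ENNReal.toReal_nonneg,
          ENNReal.ofReal_toReal (measure_ne_top μ _), mul_comm]
      rw [he, ← setLIntegral_const]
      refine setLIntegral_mono
        (((measurable_const.add (ENNReal.measurable_ofReal.comp
          ((measurable_id.pow_const 2)))).add measurable_const)) fun u hu => ?_
      have hb : c k ≤ Real.log n + (u^2 + 2) := by
        have h1 := natAbs_div_le hn hu
        have h2 : |u| + 1 ≤ u^2 + 2 := by nlinarith [sq_nonneg (|u| - 1), sq_abs u]
        rw [hc]; simp only; linarith
      calc ENNReal.ofReal (c k) ≤ ENNReal.ofReal (Real.log n + (u^2 + 2)) :=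
            ENNReal.ofReal_le_ofReal hb
        _ ≤ ENNReal.ofReal (Real.log n) + ENNReal.ofReal (u^2 + 2) := ENNReal.ofReal_add_le
        _ ≤ ENNReal.ofReal (Real.log n) + (ENNReal.ofReal (u^2) + ENNReal.ofReal 2) := by
            gcongr
            exact ENNReal.ofReal_add_le
        _ = ENNReal.ofReal (Real.log n) + ENNReal.ofReal (u^2) + 2 := by
            rw [← add_assoc]
            norm_num
    calc ∑' k : ℤ, ENNReal.ofReal (p k * c k)
        ≤ ∑' k : ℤ, ∫⁻ u in I k, (ENNReal.ofReal (Real.log n) + ENNReal.ofReal (u ^ 2) + 2) ∂μ :=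
          ENNReal.tsum_le_tsum hterm1
      _ = ∫⁻ u in ⋃ k : ℤ, I k, (ENNReal.ofReal (Real.log n) + ENNReal.ofReal (u ^ 2) + 2) ∂μ :=
          (lintegral_iUnion (fun k => measurableSet_Ico) (quant_disjoint hn) _).symm
      _ = ∫⁻ u, (ENNReal.ofReal (Real.log n) + ENNReal.ofReal (u ^ 2) + 2) ∂μ := by
          rw [hI, quant_iUnion hn, Measure.restrict_univ]
      _ = ENNReal.ofReal (Real.log n) + (∫⁻ u, ENNReal.ofReal (u ^ 2) ∂μ) + 2 := by
          rw [lintegral_add_right _ measurable_const,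
            lintegral_add_left measurable_const, lintegral_const, lintegral_const]
          simp [measure_univ]
  have hsum2 : ∑' k : ℤ, ENNReal.ofReal (q k) ≤ 4 := by
    have hgeo : ∑' m : ℕ, ENNReal.ofReal ((1/(n:ℝ)) * r ^ m) ≤ 2 := by
      rw [← ENNReal.ofReal_tsum_of_nonneg (fun m => by positivity)
            ((summable_geometric_of_lt_one hr0 hr1).mul_left _),
          tsum_mul_left, tsum_geometric_of_lt_one hr0 hr1]
      have h1r : (1 - r)⁻¹ = (n:ℝ)+1 := by
        rw [hr, show (1:ℝ) - (n:ℝ)/((n:ℝ)+1) = 1/((n:ℝ)+1) by field_simp; ring, one_div, inv_inv]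
      rw [h1r]
      calc ENNReal.ofReal ((1/(n:ℝ)) * ((n:ℝ)+1)) ≤ ENNReal.ofReal 2 :=
            ENNReal.ofReal_le_ofReal (by
              rw [div_mul_eq_mul_div, one_mul, div_le_iff₀ hn0]; linarith)
        _ = 2 := by norm_num
    rw [tsum_of_nat_of_neg_add_one ENNReal.summable ENNReal.summable]
    have e1 : (∑' m : ℕ, ENNReal.ofReal (q (m:ℤ))) ≤ 2 := by
      refine le_trans (le_of_eq (tsum_congr fun m => ?_)) hgeo
      rw [hq]; simp
    have e2 : (∑' m : ℕ, ENNReal.ofReal (q (-((m:ℤ) + 1)))) ≤ 2 := by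
      refine le_trans (ENNReal.tsum_le_tsum fun m => ?_) hgeo
      apply ENNReal.ofReal_le_ofReal
      rw [hq]
      simp only
      have hna : (-((m:ℤ) + 1)).natAbs = m + 1 := by
        rw [Int.natAbs_neg]
        exact_mod_cast Int.natAbs_natCast (m+1)
      rw [hna]
      have : r ^ (m+1) ≤ r ^ m := pow_le_pow_of_le_one hr0 hr1.le (Nat.le_succ m)
      have h1n : (0:ℝ) ≤ 1/(n:ℝ) := by positivity
      exact mul_le_mul_of_nonneg_left this h1n
    calc (∑' m : ℕ, ENNReal.ofReal (q (m:ℤ))) + ∑' m : ℕ, ENNReal.ofReal (q (-((m:ℤ) + 1)))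
        ≤ 2 + 2 := add_le_add e1 e2
      _ = 4 := by norm_num
  calc ∑' k : ℤ, ENNReal.ofReal (Real.negMulLog (p k))
      ≤ (∑' k : ℤ, ENNReal.ofReal (p k * c k)) + ∑' k : ℤ, ENNReal.ofReal (q k) := hsplit
    _ ≤ (ENNReal.ofReal (Real.log n) + (∫⁻ u, ENNReal.ofReal (u ^ 2) ∂μ) + 2) + 4 :=
        add_le_add hsum1 hsum2
    _ ≤ ENNReal.ofReal (Real.log n) + (∫⁻ u, ENNReal.ofReal (u ^ 2) ∂μ) + 8 := by
        rw [add_assoc (ENNReal.ofReal (Real.log n) + _)]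
        gcongr
        norm_num

private lemma toReal_le_one {μ : Measure ℝ} [IsProbabilityMeasure μ] (s : Set ℝ) :
    (μ s).toReal ≤ 1 := by
  have := ENNReal.toReal_mono (ENNReal.one_ne_top) (prob_le_one (μ := μ) (s := s))
  simpa using this

private lemma quantEnt_eq (n : ℕ) (μ : Measure ℝ) [IsProbabilityMeasure μ] :
    quantEnt n μ =
      (∑' k : ℤ, ENNReal.ofReal (Real.negMulLog
        ((μ (Set.Ico ((k : ℝ) / n) ((k + 1 : ℝ) / n))).toReal))).toReal / Real.log 2 := by
  rw [ENNReal.tsum_toReal_eq (fun k => ENNReal.ofReal_ne_top), quantEnt, ← tsum_div_const]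
  congr 1
  funext k
  rw [ENNReal.toReal_ofReal (Real.negMulLog_nonneg ENNReal.toReal_nonneg (toReal_le_one _))]
  rw [Real.negMulLog, Real.logb]
  ring

private lemma quantEnt_nonneg (n : ℕ) (μ : Measure ℝ) [IsProbabilityMeasure μ] :
    0 ≤ quantEnt n μ := by
  refine tsum_nonneg fun k => ?_
  have h1 : Real.logb 2 ((μ (Set.Ico ((k : ℝ) / n) ((k + 1 : ℝ) / n))).toReal) ≤ 0 :=
    Real.logb_nonpos one_lt_two ENNReal.toReal_nonneg (toReal_le_one _)
  have h0 : (0:ℝ) ≤ (μ (Set.Ico ((k : ℝ) / n) ((k + 1 : ℝ) / n))).toReal :=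
    ENNReal.toReal_nonneg
  nlinarith

private lemma quantEnt_meas (n : ℕ) (κ : Kernel ℝ ℝ) [IsMarkovKernel κ] :
    Measurable fun v => quantEnt n (κ v) := by
  have h : (fun v => quantEnt n (κ v)) = fun v =>
      (∑' k : ℤ, ENNReal.ofReal (Real.negMulLog
        ((κ v (Set.Ico ((k : ℝ) / n) ((k + 1 : ℝ) / n))).toReal))).toReal / Real.log 2 :=
    funext fun v => quantEnt_eq n (κ v)
  rw [h]
  refine Measurable.div_const ?_ _
  refine (Measurable.ennreal_tsum fun k => ?_).ennreal_toReal
  exact ENNReal.measurable_ofReal.comp (Real.continuous_negMulLog.measurable.comp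
    ((κ.measurable_coe measurableSet_Ico).ennreal_toReal))

/-- Let `⟨U|V⟩` be a nonsingular conditional distribution (given by a Markov kernel `κ` and
the law `PV` of `V`) with `E[U²] < ∞`.  Then the conditional Rényi information dimension
equals the average of the pointwise ones: if `d(U|V=v) = lim_n H(⌊nU⌋/n | V=v)/log₂ n`
exists `PV`-a.s. (with value `dv v`), then
`d(U|V) = lim_n H(⌊nU⌋/n | V)/log₂ n = E_V[d(U|V=v)]`, where
`H(⌊nU⌋/n | V) = ∫ H(⌊nU⌋/n | V=v) dPV(v)`. -/
theorem cond_rid_eq_average (PV : Measure ℝ) [IsProbabilityMeasure PV]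
    (κ : Kernel ℝ ℝ) [IsMarkovKernel κ]
    (hns : ∀ᵐ v ∂PV, Nonsingular (κ v))
    (hmom : ∫⁻ v, (∫⁻ u, ENNReal.ofReal (u ^ 2) ∂(κ v)) ∂PV < ⊤)
    (dv : ℝ → ℝ)
    (hptwise : ∀ᵐ v ∂PV,
      Tendsto (fun n : ℕ => quantEnt n (κ v) / Real.logb 2 n) atTop (nhds (dv v))) :
    Tendsto (fun n : ℕ => (∫ v, quantEnt n (κ v) ∂PV) / Real.logb 2 n) atTop
      (nhds (∫ v, dv v ∂PV)) := by
  have hlog2 : (0:ℝ) < Real.log 2 := Real.log_pos one_lt_two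
  set M : ℝ → ℝ≥0∞ := fun v => ∫⁻ u, ENNReal.ofReal (u ^ 2) ∂(κ v) with hM
  have hMmeas : Measurable M :=
    Measurable.lintegral_kernel_prod_right'
      (ENNReal.measurable_ofReal.comp (measurable_snd.pow_const 2))
  have hMae : ∀ᵐ v ∂PV, M v < ⊤ := ae_lt_top hMmeas hmom.ne
  have hint : Integrable (fun v => (M v).toReal) PV :=
    integrable_toReal_of_lintegral_ne_top hMmeas.aemeasurable hmom.ne
  set g : ℝ → ℝ := fun v => 1 + ((M v).toReal + 8) / Real.log 2 with hg
  have hgint : Integrable g PV :=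
    (integrable_const 1).add ((hint.add (integrable_const 8)).div_const _)
  have key : Tendsto (fun n : ℕ => ∫ v, quantEnt n (κ v) / Real.logb 2 n ∂PV) atTop
      (nhds (∫ v, dv v ∂PV)) := by
    refine tendsto_integral_of_dominated_convergence g
      (fun n => ((quantEnt_meas n κ).div_const _).aestronglyMeasurable) hgint ?_ hptwise
    intro n
    filter_upwards [hMae] with v hv
    have hq0 : 0 ≤ quantEnt n (κ v) := quantEnt_nonneg n (κ v)
    have hgv0 : 0 ≤ ((M v).toReal + 8) / Real.log 2 := by positivity
    rcases lt_or_ge n 2 with h2 | h2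
    · have hz : Real.logb 2 (n:ℝ) = 0 := by
        interval_cases n <;> simp
      rw [hz, div_zero, norm_zero, hg]
      simp only
      linarith
    · have hn1 : 1 ≤ n := by omega
      have hlb : (1:ℝ) ≤ Real.logb 2 (n:ℝ) := by
        have : Real.logb 2 (2:ℝ) ≤ Real.logb 2 (n:ℝ) :=
          Real.logb_le_logb_of_le one_lt_two (by norm_num) (by exact_mod_cast h2)
        rwa [Real.logb_self_eq_one one_lt_two] at this
      have hlbpos : (0:ℝ) < Real.logb 2 (n:ℝ) := by linarith
      have hT := key_bound (κ v) hn1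
      have hfin : ENNReal.ofReal (Real.log n) + M v + 8 ≠ ⊤ := by
        simp [ENNReal.add_eq_top, hv.ne]
      have htr : (∑' k : ℤ, ENNReal.ofReal (Real.negMulLog
            ((κ v (Set.Ico ((k : ℝ) / n) ((k + 1 : ℝ) / n))).toReal))).toReal
          ≤ Real.log n + ((M v).toReal + 8) := by
        have h1 := ENNReal.toReal_mono hfin hT
        have h2' : (ENNReal.ofReal (Real.log n) + M v + 8).toReal
            = Real.log n + ((M v).toReal + 8) := by
          rw [ENNReal.toReal_add (by simp [ENNReal.add_eq_top, hv.ne]) (by norm_num),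
            ENNReal.toReal_add ENNReal.ofReal_ne_top hv.ne,
            ENNReal.toReal_ofReal (Real.log_nonneg (by exact_mod_cast hn1))]
          norm_num
          ring
        rw [h2'] at h1
        exact h1
      have hquant : quantEnt n (κ v) ≤ Real.logb 2 n + ((M v).toReal + 8) / Real.log 2 := by
        rw [quantEnt_eq, Real.logb]
        calc _ ≤ (Real.log n + ((M v).toReal + 8)) / Real.log 2 := by
              exact (div_le_div_iff_of_pos_right hlog2).mpr htr
          _ = Real.log n / Real.log 2 + ((M v).toReal + 8) / Real.log 2 := by ring
      rw [Real.norm_of_nonneg (div_nonneg hq0 hlbpos.le)]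
      calc quantEnt n (κ v) / Real.logb 2 (n:ℝ)
          ≤ (Real.logb 2 (n:ℝ) + ((M v).toReal + 8) / Real.log 2) / Real.logb 2 (n:ℝ) := by
            exact (div_le_div_iff_of_pos_right hlbpos).mpr hquant
        _ = 1 + (((M v).toReal + 8) / Real.log 2) / Real.logb 2 (n:ℝ) := by
            field_simp
        _ ≤ 1 + ((M v).toReal + 8) / Real.log 2 := by
            have := div_le_self hgv0 hlb
            linarith
  refine key.congr fun n => ?_
  exact integral_div _ _
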